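/- arXiv:1405.7511 — 2 statements merged into one kernel-verified Lean document; each statement's English description precedes it below -/
import Mathlib

section
/- For 0 < β ≤ 1 and x ≥ β^{1/4}, with c(x) = sqrt((x⁴ − β)/(x⁴ + βx²)), c̃(x) = sqrt((x⁴ − β)/(x⁴ + x²)), and y(x) = sqrt((x + 1/x)(x + β/x)), the identity x·c(x)·c̃(x) = (1/y(x))·sqrt((y(x)² − β − 1)² − 4β) holds; i.e., the optimal Frobenius shrinker η*(y) = x c(x) c̃(x) equals sqrt((y² − β − 1)² − 4β)/y. -/
/-- For `0 < β ≤ 1` and `x ≥ β^{1/4}`, with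
`c(x) = sqrt((x⁴−β)/(x⁴+βx²))`, `c̃(x) = sqrt((x⁴−β)/(x⁴+x²))`,
`y(x) = sqrt((x+1/x)(x+β/x))`, one has
`x·c(x)·c̃(x) = (1/y(x))·sqrt((y(x)²−β−1)² − 4β)`. -/
theorem frobenius_shrinker_identity (β : ℝ) (hβ0 : 0 < β) (hβ1 : β ≤ 1)
    (x : ℝ) (hx : β ^ ((1:ℝ)/4) ≤ x) :
    x * Real.sqrt ((x^4 - β)/(x^4 + β*x^2)) * Real.sqrt ((x^4 - β)/(x^4 + x^2)) =
      (1 / Real.sqrt ((x + 1/x) * (x + β/x))) *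
        Real.sqrt (((Real.sqrt ((x + 1/x) * (x + β/x)))^2 - β - 1)^2 - 4*β) := by
  have hβle : (0:ℝ) ≤ β := hβ0.le
  have hx0 : (0:ℝ) < x := lt_of_lt_of_le (Real.rpow_pos_of_pos hβ0 _) hx
  have hβx : (β ^ ((1:ℝ)/4)) ^ 4 = β := by
    rw [← Real.rpow_natCast (β ^ ((1:ℝ)/4)) 4, ← Real.rpow_mul hβle]
    norm_num
  have hx4 : β ≤ x ^ 4 := by
    calc β = (β ^ ((1:ℝ)/4)) ^ 4 := hβx.symm
    _ ≤ x ^ 4 := pow_le_pow_left₀ (Real.rpow_nonneg hβle _) hx 4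
  have hnum : (0:ℝ) ≤ x ^ 4 - β := by linarith
  have hS0 : (0:ℝ) < (x^2+1)*(x^2+β) := by positivity
  set S := Real.sqrt ((x^2+1)*(x^2+β)) with hSdef
  have hSpos : 0 < S := Real.sqrt_pos.mpr hS0
  have hy_arg : (x + 1/x) * (x + β/x) = (x^2+1)*(x^2+β)/x^2 := by
    field_simp
  have hA0 : (0:ℝ) ≤ (x + 1/x) * (x + β/x) := by
    rw [hy_arg]; positivity
  have hy : Real.sqrt ((x + 1/x) * (x + β/x)) = S / x := by
    rw [hy_arg, Real.sqrt_div hS0.le, Real.sqrt_sq hx0.le]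
  have hsq : (Real.sqrt ((x + 1/x) * (x + β/x)))^2 = (x^2+1)*(x^2+β)/x^2 := by
    rw [Real.sq_sqrt hA0, hy_arg]
  have hinner : ((Real.sqrt ((x + 1/x) * (x + β/x)))^2 - β - 1)^2 - 4*β
      = ((x^4 - β)/x^2)^2 := by
    rw [hsq]; field_simp; ring
  have hin : Real.sqrt (((Real.sqrt ((x + 1/x) * (x + β/x)))^2 - β - 1)^2 - 4*β)
      = (x^4 - β)/x^2 := by
    rw [hinner, Real.sqrt_sq (by positivity)]
  have hc1 : Real.sqrt ((x^4 - β)/(x^4 + β*x^2)) =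
      Real.sqrt (x^4 - β) / Real.sqrt (x^4 + β*x^2) := Real.sqrt_div hnum _
  have hc2 : Real.sqrt ((x^4 - β)/(x^4 + x^2)) =
      Real.sqrt (x^4 - β) / Real.sqrt (x^4 + x^2) := Real.sqrt_div hnum _
  have hden : Real.sqrt (x^4 + β*x^2) * Real.sqrt (x^4 + x^2) = x^2 * S := by
    rw [← Real.sqrt_mul (by positivity)]
    have : (x^4 + β*x^2) * (x^4 + x^2) = (x^2)^2 * ((x^2+1)*(x^2+β)) := by ring
    rw [this, Real.sqrt_mul (by positivity), Real.sqrt_sq (by positivity)]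
  have hnn : Real.sqrt (x^4 - β) * Real.sqrt (x^4 - β) = x^4 - β :=
    Real.mul_self_sqrt hnum
  rw [hin, hy, hc1, hc2]
  have hx2 : x ≠ 0 := hx0.ne'
  field_simp
  rw [Real.sq_sqrt hnum, show x^2*(x^2+β) = x^4+β*x^2 by ring, show x^2*(x^2+1) = x^4+x^2 by ring]
  rw [mul_assoc (x^4-β), hden]
  ring
end

section
/- For x > 0 and c, c̃ ∈ [0,1] with cc̃ ≥ ss̃ where s = sqrt(1−c²), s̃ = sqrt(1−c̃²), the nuclear norm (sum of singular values) of Δ(η) = [[ηcc̃ − x, ηcs̃],[ηc̃s, ηss̃]] as a function of η ≥ 0 is minimized at η = x(cc̃ − ss̃). -/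
lemma key_sum (T e : ℝ) (he : 0 ≤ e) (hte : 2*e ≤ T) :
    (1 / Real.sqrt 2) * Real.sqrt (T + Real.sqrt (T^2 - 4*e^2)) +
    (1 / Real.sqrt 2) * Real.sqrt (T - Real.sqrt (T^2 - 4*e^2)) =
    Real.sqrt (T + 2*e) := by
  have h1 : (0:ℝ) ≤ T + 2*e := by linarith
  have h2 : (0:ℝ) ≤ T - 2*e := by linarith
  set u := Real.sqrt (T + 2*e) with hu
  set v := Real.sqrt (T - 2*e) with hv
  have hu0 : 0 ≤ u := Real.sqrt_nonneg _
  have hv0 : 0 ≤ v := Real.sqrt_nonneg _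
  have hu2 : u^2 = T + 2*e := Real.sq_sqrt h1
  have hv2 : v^2 = T - 2*e := Real.sq_sqrt h2
  have hvu : v ≤ u := Real.sqrt_le_sqrt (by linarith)
  have hD : Real.sqrt (T^2 - 4*e^2) = u * v := by
    rw [show T^2 - 4*e^2 = (T + 2*e) * (T - 2*e) by ring, Real.sqrt_mul h1]
  have hA : Real.sqrt (T + u*v) = (u + v) / Real.sqrt 2 := by
    rw [show T + u*v = ((u+v)/Real.sqrt 2)^2 by
      rw [div_pow, Real.sq_sqrt (by norm_num : (0:ℝ) ≤ 2)]
      nlinarith [hu2, hv2]]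
    exact Real.sqrt_sq (by positivity)
  have hB : Real.sqrt (T - u*v) = (u - v) / Real.sqrt 2 := by
    rw [show T - u*v = ((u-v)/Real.sqrt 2)^2 by
      rw [div_pow, Real.sq_sqrt (by norm_num : (0:ℝ) ≤ 2)]
      nlinarith [hu2, hv2]]
    exact Real.sqrt_sq (div_nonneg (by linarith) (Real.sqrt_nonneg 2))
  rw [hD, hA, hB]
  field_simp
  rw [Real.sq_sqrt (by norm_num : (0:ℝ) ≤ 2)]; ring

/-- For `x > 0`, `c, c̃ ∈ (0,1)` with `cc̃ ≥ ss̃`, the nuclear norm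
`σ₊(η) + σ₋(η)` of `Δ(η) = [[ηcc̃ − x, ηcs̃],[ηc̃s, ηss̃]]`, with
`σ±(η) = (1/√2)·sqrt(t(η) ± sqrt(t(η)² − 4d(η)²))`,
`t(η) = η² + x² − 2xηcc̃`, `d(η) = −xηss̃`, is minimized over `η ≥ 0`
at `η = x(cc̃ − ss̃)`. -/
theorem nuclear_norm_min (x c ct : ℝ) (hx : 0 < x)
    (hc : c ∈ Set.Ioo (0:ℝ) 1) (hct : ct ∈ Set.Ioo (0:ℝ) 1)
    (hmaj : Real.sqrt (1 - c^2) * Real.sqrt (1 - ct^2) ≤ c * ct) :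
    let s := Real.sqrt (1 - c^2)
    let st := Real.sqrt (1 - ct^2)
    let t : ℝ → ℝ := fun η => η^2 + x^2 - 2*x*η*c*ct
    let d : ℝ → ℝ := fun η => -(x*η*s*st)
    let N : ℝ → ℝ := fun η =>
      (1 / Real.sqrt 2) * Real.sqrt (t η + Real.sqrt ((t η)^2 - 4*(d η)^2)) +
      (1 / Real.sqrt 2) * Real.sqrt (t η - Real.sqrt ((t η)^2 - 4*(d η)^2))
    ∀ η : ℝ, 0 ≤ η → N (x * (c*ct - s*st)) ≤ N η := by
  intro s st t d N η hη
  obtain ⟨hc0, hc1⟩ := hc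
  obtain ⟨hct0, hct1⟩ := hct
  have hs2 : s^2 = 1 - c^2 := Real.sq_sqrt (by nlinarith)
  have hst2 : st^2 = 1 - ct^2 := Real.sq_sqrt (by nlinarith)
  have hs0 : 0 ≤ s := Real.sqrt_nonneg _
  have hst0 : 0 ≤ st := Real.sqrt_nonneg _
  -- cc̃ + ss̃ ≤ 1
  have hsum1 : c*ct + s*st ≤ 1 := by nlinarith [sq_nonneg (c - ct), sq_nonneg (s - st)]
  set m := c*ct - s*st with hm
  have hm0 : 0 ≤ m := by linarith
  have hm1 : m ≤ 1 := by nlinarith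
  have hNs : ∀ ξ : ℝ, 0 ≤ ξ → N ξ = Real.sqrt (ξ^2 + x^2 - 2*x*ξ*m) := by
    intro ξ hξ
    have he : 0 ≤ x*ξ*s*st := by positivity
    have hte : 2*(x*ξ*s*st) ≤ t ξ := by
      have hxξ : (0:ℝ) ≤ 2*x*ξ := by positivity
      have : 2*x*ξ*(c*ct + s*st) ≤ 2*x*ξ := by nlinarith [mul_le_mul_of_nonneg_left hsum1 hxξ]
      simp only [t]; nlinarith [sq_nonneg (ξ - x)]
    have := key_sum (t ξ) (x*ξ*s*st) he hte
    simp only [N, d]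
    rw [show (4:ℝ)*(-(x*ξ*s*st))^2 = 4*(x*ξ*s*st)^2 by ring, this]
    congr 1
    simp only [t]; ring
  rw [hNs η hη, hNs (x*m) (by positivity)]
  apply Real.sqrt_le_sqrt
  nlinarith [sq_nonneg (η - x*m)]
end
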